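/- arXiv:1905.11838 — 2 statements merged into one kernel-verified Lean document; each statement's English description precedes it below -/
import Mathlib

section
/- Fix the candidate set C = {a,b,c} and a normalized score vector α of length 3, and for each ordered pair (u,v) of distinct candidates fix a profile P_u^v as in the context. Let w_1,…,w_n be positive integers each divisible by 8, let M be a positive integer divisible by 8, let k be a positive integer with k ≤ n, 2k < n and M < ∑_{i=1}^n w_i, and let M' be an integer divisible by 8 with M' > ∑_{i=1}^n w_i. Define voter groups: for each i ∈ [n], G_i consists of w_i copies of P_a^c and M' − w_i copies of P_b^c; and Ĝ consists of (kM'+M)/2 − 3 copies of P_c^a, (kM'−M)/2 − 1 copies of P_c^b, and (kM'−M)/2 − 1 copies of P_a^b. Then the Optimal Attack instance (C, {G_1,…,G_n, Ĝ}, k_a = n+1, k_d = k) for the scoring rule of α is a Yes instance if and only if there is NO index set I ⊆ [n] with |I| = k and ∑_{i∈I} w_i = M. -/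
open Finset

/-- A vote over a candidate set `C` with `m` candidates: a ranking assigning each
candidate its position. -/
abbrev Vote (C : Type*) (m : ℕ) := C ≃ Fin m

/-- The score of candidate `x` in profile `P` under score vector `α`. -/
def score {C : Type*} {m : ℕ} (α : Fin m → ℝ) (P : Multiset (Vote C m)) (x : C) : ℝ :=
  (P.map fun v => α (v x)).sum

/-- The scoring rule of `α`: the set of candidates with maximum score. -/
def scoringRule {C : Type*} {m : ℕ} (α : Fin m → ℝ) (P : Multiset (Vote C m)) : Set C :=
  {x | ∀ y, score α P y ≤ score α P x}

/-- `margin P x y`: number of votes preferring `x` to `y` minus those preferring `y` to `x`. -/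
def margin {C : Type*} {m : ℕ} (P : Multiset (Vote C m)) (x y : C) : ℤ :=
  ((P.filter fun v => v x < v y).card : ℤ) - ((P.filter fun v => v y < v x).card : ℤ)

/-- `c` is the Condorcet winner of `P`. -/
def CondorcetWinner {C : Type*} {m : ℕ} (P : Multiset (Vote C m)) (c : C) : Prop :=
  ∀ y, y ≠ c → 0 < margin P c y

/-- The Condorcet voting rule: `{c}` if a Condorcet winner `c` exists, all candidates otherwise. -/
def condorcetRule {C : Type*} {m : ℕ} (P : Multiset (Vote C m)) : Set C :=
  {x | CondorcetWinner P x ∨ ¬ ∃ c, CondorcetWinner P c}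

/-- `α` is monotone nonincreasing (part of being a score vector). -/
def IsMonotoneScore {m : ℕ} (α : Fin m → ℝ) : Prop :=
  ∀ i j : Fin m, i ≤ j → α j ≤ α i

/-- `α` is normalized: some consecutive difference is `1` and all later entries are `0`. -/
def IsNormalized {m : ℕ} (α : Fin m → ℝ) : Prop :=
  ∃ j : ℕ, ∃ hj : j + 1 < m, α ⟨j, Nat.lt_of_succ_lt hj⟩ - α ⟨j + 1, hj⟩ = 1 ∧
    ∀ ℓ : Fin m, j < (ℓ : ℕ) → α ℓ = 0

/-- `Q` is a profile `P_u^v`: it has `m` votes and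
`s_Q(u) + 1 = s_Q(v) - 1 = s_Q(z)` for every `z ∉ {u, v}`. -/
def PfGood {C : Type*} {m : ℕ} (α : Fin m → ℝ) (Q : Multiset (Vote C m)) (u v : C) : Prop :=
  Multiset.card Q = m ∧ score α Q u + 1 = score α Q v - 1 ∧
    ∀ z : C, z ≠ u → z ≠ v → score α Q z = score α Q v - 1

/-- The Optimal Defense instance with groups `G`, attacker resource `ka` and defender
resource `kd` is a Yes instance for voting rule `r`. -/
def DefenseYes {C : Type*} {m N : ℕ} (r : Multiset (Vote C m) → Set C)
    (G : Fin N → Multiset (Vote C m)) (ka kd : ℕ) : Prop :=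
  ∃ I : Finset (Fin N), I.card ≤ kd ∧
    ∀ I' : Finset (Fin N), Disjoint I I' → I'.card ≤ ka →
      r (∑ i ∈ Finset.univ \ I', G i) = r (∑ i, G i)

/-- The Optimal Attack instance with groups `G`, attacker resource `ka` and defender
resource `kd` is a Yes instance for voting rule `r`. -/
def AttackYes {C : Type*} {m N : ℕ} (r : Multiset (Vote C m) → Set C)
    (G : Fin N → Multiset (Vote C m)) (ka kd : ℕ) : Prop :=
  ∃ I : Finset (Fin N), I.card ≤ ka ∧
    ∀ I' : Finset (Fin N), I'.card ≤ kd →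
      r (∑ i ∈ Finset.univ \ (I \ I'), G i) ≠ r (∑ i, G i)

section Aux

lemma score_add' {C : Type*} {m : ℕ} (α : Fin m → ℝ) (P Q : Multiset (Vote C m)) (x : C) :
    score α (P + Q) x = score α P x + score α Q x := by
  simp [score]

lemma score_nsmul' {C : Type*} {m : ℕ} (α : Fin m → ℝ) (r : ℕ) (P : Multiset (Vote C m)) (x : C) :
    score α (r • P) x = r * score α P x := by
  induction r with
  | zero => simp [score]
  | succ t ih => rw [succ_nsmul, score_add', ih]; push_cast; ring

lemma score_sum' {C ι : Type*} {m : ℕ} (α : Fin m → ℝ) (f : ι → Multiset (Vote C m))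
    (R : Finset ι) (x : C) :
    score α (∑ i ∈ R, f i) x = ∑ i ∈ R, score α (f i) x := by
  classical
  induction R using Finset.induction with
  | empty => simp [score]
  | insert _ _ h ih => rw [Finset.sum_insert h, Finset.sum_insert h, score_add', ih]

lemma sum_score' {C : Type*} [Fintype C] {m : ℕ} (α : Fin m → ℝ) (Q : Multiset (Vote C m)) :
    ∑ x, score α Q x = Q.card * ∑ i, α i := by
  induction Q using Multiset.induction with
  | empty => simp [score]
  | cons v Q ih =>
      have h : ∀ x, score α (v ::ₘ Q) x = α (v x) + score α Q x := by
        intro x; simp [score]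
      simp only [h, Finset.sum_add_distrib, ih, Equiv.sum_comp v α, Multiset.card_cons]
      push_cast; ring

lemma univ_eq' {C : Type} [Fintype C] [DecidableEq C] {a b c : C}
    (hC : Fintype.card C = 3) (hab : a ≠ b) (hac : a ≠ c) (hbc : b ≠ c) :
    (univ : Finset C) = {a, b, c} := by
  symm
  apply Finset.eq_univ_of_card
  rw [Finset.card_insert_of_notMem (by simp [hab, hac]),
    Finset.card_insert_of_notMem (by simp [hbc]), Finset.card_singleton, hC]

lemma all_eq' {C : Type} [Fintype C] [DecidableEq C] {a b c : C}
    (hC : Fintype.card C = 3) (hab : a ≠ b) (hac : a ≠ c) (hbc : b ≠ c) (x : C) :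
    x = a ∨ x = b ∨ x = c := by
  have : x ∈ (univ : Finset C) := Finset.mem_univ x
  rw [univ_eq' hC hab hac hbc] at this
  simpa using this

lemma sum_three' {C : Type} [Fintype C] [DecidableEq C] {a b c : C}
    (hC : Fintype.card C = 3) (hab : a ≠ b) (hac : a ≠ c) (hbc : b ≠ c)
    (f : C → ℝ) : ∑ x, f x = f a + f b + f c := by
  rw [univ_eq' hC hab hac hbc, Finset.sum_insert (by simp [hab, hac]),
    Finset.sum_insert (by simp [hbc]), Finset.sum_singleton]
  ring

lemma pf_scores' {C : Type} [Fintype C] [DecidableEq C] (hC : Fintype.card C = 3)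
    {α : Fin 3 → ℝ} {Q : Multiset (Vote C 3)} {u v z : C}
    (huv : u ≠ v) (hzu : z ≠ u) (hzv : z ≠ v) (h : PfGood α Q u v) :
    score α Q u = (∑ i, α i) - 1 ∧ score α Q v = (∑ i, α i) + 1 ∧
      score α Q z = ∑ i, α i := by
  obtain ⟨hcard, h1, h2⟩ := h
  have hz := h2 z hzu hzv
  have hsum : ∑ x, score α Q x = 3 * ∑ i, α i := by
    rw [sum_score', hcard]; norm_num
  rw [sum_three' hC huv hzu.symm hzv.symm (score α Q)] at hsum
  refine ⟨by linarith, by linarith, by linarith⟩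

lemma rule_eq' {C : Type} [Fintype C] [DecidableEq C] {a b c : C}
    (hC : Fintype.card C = 3) (hab : a ≠ b) (hac : a ≠ c) (hbc : b ≠ c)
    {m : ℕ} {α : Fin m → ℝ} {P : Multiset (Vote C m)}
    (h1 : score α P a < score α P c) (h2 : score α P b < score α P c) :
    scoringRule α P = {c} := by
  ext x
  simp only [scoringRule, Set.mem_setOf_eq, Set.mem_singleton_iff]
  constructor
  · intro hx
    rcases all_eq' hC hab hac hbc x with rfl | rfl | rfl
    · exact absurd (hx c) (by linarith)
    · exact absurd (hx c) (by linarith)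
    · rfl
  · rintro rfl y
    rcases all_eq' hC hab hac hbc y with rfl | rfl | rfl
    · linarith
    · linarith
    · exact le_refl _

lemma rule_ne' {C : Type*} {m : ℕ} {α : Fin m → ℝ} {P : Multiset (Vote C m)} {c x : C}
    (h : score α P c < score α P x) : scoringRule α P ≠ {c} := by
  intro he
  have : c ∈ scoringRule α P := he ▸ rfl
  exact absurd (this x) (by linarith)

lemma split_sum' {M : Type*} [AddCommMonoid M] {n : ℕ} (f : Fin (n+1) → M)
    (R : Finset (Fin (n+1))) :
    ∑ j ∈ R, f j =
      ∑ i ∈ univ.filter (fun i : Fin n => i.castSucc ∈ R), f i.castSucc +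
        (if Fin.last n ∈ R then f (Fin.last n) else 0) := by
  classical
  have h1 : ∑ j : Fin (n+1), (if j ∈ R then f j else 0) = ∑ j ∈ R, f j := by
    rw [Finset.sum_ite_mem, Finset.univ_inter]
  rw [← h1, Fin.sum_univ_castSucc, Finset.sum_filter]

end Aux

set_option maxHeartbeats 4000000 in
/-- the k-Sum reduction instance for Optimal Attack under a scoring
rule with 3 candidates. -/
theorem stmt3 {C : Type} [Fintype C] [DecidableEq C] (hC : Fintype.card C = 3)
    (a b c : C) (hab : a ≠ b) (hac : a ≠ c) (hbc : b ≠ c)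
    (α : Fin 3 → ℝ) (hmono : IsMonotoneScore α) (hnorm : IsNormalized α)
    (Pf : C → C → Multiset (Vote C 3))
    (hPf : ∀ u v : C, u ≠ v → PfGood α (Pf u v) u v)
    (n : ℕ) (w : Fin n → ℕ) (hwpos : ∀ i, 0 < w i) (hw8 : ∀ i, 8 ∣ w i)
    (M k M' : ℕ) (hMpos : 0 < M) (hM8 : 8 ∣ M)
    (hkpos : 0 < k) (hkn : k ≤ n) (h2k : 2 * k < n)
    (hMsum : M < ∑ i, w i) (hM'8 : 8 ∣ M') (hM'big : (∑ i, w i) < M') :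
    AttackYes (scoringRule α)
      (Fin.snoc (fun i : Fin n => w i • Pf a c + (M' - w i) • Pf b c)
        (((k * M' + M) / 2 - 3) • Pf c a + ((k * M' - M) / 2 - 1) • Pf c b +
          ((k * M' - M) / 2 - 1) • Pf a b))
      (n + 1) k ↔
    ¬ ∃ I : Finset (Fin n), I.card = k ∧ ∑ i ∈ I, w i = M := by
  classical
  -- numeric preliminaries
  obtain ⟨m0, hm0⟩ := hM8
  obtain ⟨m1, hm1⟩ := hM'8
  have hswpos : 0 < ∑ i, w i := lt_trans hMpos hMsum
  have hM'pos : 0 < M' := lt_trans hswpos hM'big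
  have hMM' : M < M' := lt_trans hMsum hM'big
  have hm1pos : 0 < m1 := by omega
  have hm01 : m0 < m1 := by omega
  have hkm1 : m1 ≤ k * m1 := Nat.le_mul_of_pos_left m1 hkpos
  have hkM' : k * M' = 8 * (k * m1) := by rw [hm1]; ring
  have hwM' : ∀ i, w i ≤ M' := fun i =>
    le_of_lt (lt_of_le_of_lt
      (Finset.single_le_sum (fun j _ => Nat.zero_le (w j)) (Finset.mem_univ i)) hM'big)
  have hK1 : 1 ≤ k * m1 := Nat.one_le_iff_ne_zero.mpr (Nat.mul_ne_zero (by omega) (by omega))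
  have hKm0 : m0 + 1 ≤ k * m1 := le_trans (by omega) hkm1
  have hAn : (k * M' + M) / 2 - 3 = 4 * (k * m1) + 4 * m0 - 3 := by
    rw [hm0, hkM']
    generalize k * m1 = K
    omega
  have hBn : (k * M' - M) / 2 - 1 = 4 * (k * m1) - (4 * m0 + 1) := by
    rw [hm0, hkM']
    have h := hKm0
    generalize k * m1 = K at h ⊢
    omega
  have h34 : 3 ≤ 4 * (k * m1) + 4 * m0 := by
    have h := hK1; generalize k * m1 = K at h ⊢; omega
  have h41 : 4 * m0 + 1 ≤ 4 * (k * m1) := by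
    have h := hKm0; generalize k * m1 = K at h ⊢; omega
  -- profile score facts
  obtain ⟨sac_a, sac_c, sac_b⟩ := pf_scores' hC hac hab.symm hbc (hPf a c hac)
  obtain ⟨sbc_b, sbc_c, sbc_a⟩ := pf_scores' hC hbc hab hac (hPf b c hbc)
  obtain ⟨sca_c, sca_a, sca_b⟩ := pf_scores' hC hac.symm hbc hab.symm (hPf c a hac.symm)
  obtain ⟨scb_c, scb_b, scb_a⟩ := pf_scores' hC hbc.symm hac hab (hPf c b hbc.symm)
  obtain ⟨sab_a, sab_b, sab_c⟩ := pf_scores' hC hab hac.symm hbc.symm (hPf a b hab)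
  set S : ℝ := ∑ i, α i with hS
  set G : Fin (n+1) → Multiset (Vote C 3) :=
    Fin.snoc (fun i : Fin n => w i • Pf a c + (M' - w i) • Pf b c)
      (((k * M' + M) / 2 - 3) • Pf c a + ((k * M' - M) / 2 - 1) • Pf c b +
        ((k * M' - M) / 2 - 1) • Pf a b) with hG
  set A : ℝ := (((k * M' + M) / 2 - 3 : ℕ) : ℝ) with hA
  set B : ℝ := (((k * M' - M) / 2 - 1 : ℕ) : ℝ) with hB
  have rM : (M : ℝ) = 8 * (m0 : ℝ) := by rw [hm0]; push_cast; ring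
  have rM' : (M' : ℝ) = 8 * (m1 : ℝ) := by rw [hm1]; push_cast; ring
  have rA : A = 4 * ((k * m1 : ℕ) : ℝ) + 4 * (m0 : ℝ) - 3 := by
    rw [hA, hAn, Nat.cast_sub h34]; push_cast; ring
  have rB : B = 4 * ((k * m1 : ℕ) : ℝ) - 4 * (m0 : ℝ) - 1 := by
    rw [hB, hBn, Nat.cast_sub h41]; push_cast; ring
  have hAB1 : A - B = (M : ℝ) - 2 := by rw [rA, rB, rM]; push_cast; ring
  have hAB2 : 2 * B = (k : ℝ) * (M' : ℝ) - (M : ℝ) - 2 := by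
    rw [rB, rM, rM']; push_cast; ring
  have hAB3 : A + B = (k : ℝ) * (M' : ℝ) - 4 := by
    rw [rA, rB, rM']; push_cast; ring
  -- group scores
  have hga : ∀ i : Fin n, score α (G i.castSucc) a = (M' : ℝ) * S - (w i : ℝ) := by
    intro i
    rw [hG]
    simp only [Fin.snoc_castSucc]
    rw [score_add', score_nsmul', score_nsmul', sac_a, sbc_a, Nat.cast_sub (hwM' i)]
    ring
  have hgb : ∀ i : Fin n, score α (G i.castSucc) b = (M' : ℝ) * S - (M' : ℝ) + (w i : ℝ) := by
    intro i
    rw [hG]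
    simp only [Fin.snoc_castSucc]
    rw [score_add', score_nsmul', score_nsmul', sac_b, sbc_b, Nat.cast_sub (hwM' i)]
    ring
  have hgc : ∀ i : Fin n, score α (G i.castSucc) c = (M' : ℝ) * S + (M' : ℝ) := by
    intro i
    rw [hG]
    simp only [Fin.snoc_castSucc]
    rw [score_add', score_nsmul', score_nsmul', sac_c, sbc_c, Nat.cast_sub (hwM' i)]
    ring
  have hha : score α (G (Fin.last n)) a = (A + 2 * B) * S + ((M : ℝ) - 2) := by
    rw [hG]
    simp only [Fin.snoc_last]
    rw [score_add', score_add', score_nsmul', score_nsmul', score_nsmul',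
      sca_a, scb_a, sab_a, ← hA, ← hB]
    linear_combination hAB1
  have hhb : score α (G (Fin.last n)) b =
      (A + 2 * B) * S + ((k : ℝ) * (M' : ℝ) - (M : ℝ) - 2) := by
    rw [hG]
    simp only [Fin.snoc_last]
    rw [score_add', score_add', score_nsmul', score_nsmul', score_nsmul',
      sca_b, scb_b, sab_b, ← hA, ← hB]
    linear_combination hAB2
  have hhc : score α (G (Fin.last n)) c =
      (A + 2 * B) * S - ((k : ℝ) * (M' : ℝ) - 4) := by
    rw [hG]
    simp only [Fin.snoc_last]
    rw [score_add', score_add', score_nsmul', score_nsmul', score_nsmul',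
      sca_c, scb_c, sab_c, ← hA, ← hB]
    linear_combination -hAB3
  -- decomposition of scores of partial tallies
  have SD : ∀ (R : Finset (Fin (n+1))) (x : C),
      score α (∑ j ∈ R, G j) x =
        (∑ i ∈ univ.filter (fun i : Fin n => i.castSucc ∈ R), score α (G i.castSucc) x) +
          (if Fin.last n ∈ R then score α (G (Fin.last n)) x else 0) := by
    intro R x
    rw [score_sum']
    exact split_sum' (fun j => score α (G j) x) R
  have SA : ∀ R : Finset (Fin (n+1)),
      score α (∑ j ∈ R, G j) a =
        ((univ.filter (fun i : Fin n => i.castSucc ∈ R)).card : ℝ) * ((M' : ℝ) * S)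
          - (∑ i ∈ univ.filter (fun i : Fin n => i.castSucc ∈ R), (w i : ℝ))
          + (if Fin.last n ∈ R then (A + 2 * B) * S + ((M : ℝ) - 2) else 0) := by
    intro R
    have h1 : ∑ i ∈ univ.filter (fun i : Fin n => i.castSucc ∈ R), score α (G i.castSucc) a
        = ∑ i ∈ univ.filter (fun i : Fin n => i.castSucc ∈ R), ((M' : ℝ) * S - (w i : ℝ)) :=
      Finset.sum_congr rfl (fun i _ => hga i)
    rw [SD R a, hha, h1, Finset.sum_sub_distrib, Finset.sum_const, nsmul_eq_mul]
  have SB : ∀ R : Finset (Fin (n+1)),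
      score α (∑ j ∈ R, G j) b =
        ((univ.filter (fun i : Fin n => i.castSucc ∈ R)).card : ℝ) * ((M' : ℝ) * S - (M' : ℝ))
          + (∑ i ∈ univ.filter (fun i : Fin n => i.castSucc ∈ R), (w i : ℝ))
          + (if Fin.last n ∈ R then (A + 2 * B) * S + ((k : ℝ) * (M' : ℝ) - (M : ℝ) - 2)
              else 0) := by
    intro R
    have h1 : ∑ i ∈ univ.filter (fun i : Fin n => i.castSucc ∈ R), score α (G i.castSucc) b
        = ∑ i ∈ univ.filter (fun i : Fin n => i.castSucc ∈ R), ((M' : ℝ) * S - (M' : ℝ) + (w i : ℝ)) :=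
      Finset.sum_congr rfl (fun i _ => hgb i)
    rw [SD R b, hhb, h1, Finset.sum_add_distrib, Finset.sum_const, nsmul_eq_mul]
  have SC : ∀ R : Finset (Fin (n+1)),
      score α (∑ j ∈ R, G j) c =
        ((univ.filter (fun i : Fin n => i.castSucc ∈ R)).card : ℝ) * ((M' : ℝ) * S + (M' : ℝ))
          + (if Fin.last n ∈ R then (A + 2 * B) * S - ((k : ℝ) * (M' : ℝ) - 4) else 0) := by
    intro R
    have h1 : ∑ i ∈ univ.filter (fun i : Fin n => i.castSucc ∈ R), score α (G i.castSucc) c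
        = ∑ i ∈ univ.filter (fun i : Fin n => i.castSucc ∈ R), ((M' : ℝ) * S + (M' : ℝ)) :=
      Finset.sum_congr rfl (fun i _ => hgc i)
    rw [SD R c, hhc, h1, Finset.sum_const, nsmul_eq_mul]
  -- real inequalities
  have rM'0 : (0 : ℝ) ≤ (M' : ℝ) := Nat.cast_nonneg _
  have rM'pos : (0 : ℝ) < (M' : ℝ) := by exact_mod_cast hM'pos
  have rMM' : (M : ℝ) < (M' : ℝ) := by exact_mod_cast hMM'
  have rM8 : (8 : ℝ) ≤ (M : ℝ) := by exact_mod_cast Nat.le_of_dvd hMpos ⟨m0, hm0⟩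
  have rW : ∀ T : Finset (Fin n), (∑ i ∈ T, (w i : ℝ)) < (M' : ℝ) := by
    intro T
    have h1 : (∑ i ∈ T, w i) < M' :=
      lt_of_le_of_lt (Finset.sum_le_sum_of_subset (Finset.subset_univ T)) hM'big
    exact_mod_cast h1
  have rW0 : ∀ T : Finset (Fin n), (0 : ℝ) ≤ ∑ i ∈ T, (w i : ℝ) :=
    fun T => Finset.sum_nonneg (fun i _ => Nat.cast_nonneg _)
  -- winner determination facts
  have F1 : ∀ R : Finset (Fin (n+1)), Fin.last n ∈ R →
      k + 1 ≤ (univ.filter (fun i : Fin n => i.castSucc ∈ R)).card →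
      scoringRule α (∑ j ∈ R, G j) = {c} := by
    intro R hlast hcard
    have ht : ((k : ℝ) + 1) ≤ ((univ.filter (fun i : Fin n => i.castSucc ∈ R)).card : ℝ) := by exact_mod_cast hcard
    have hm := mul_le_mul_of_nonneg_right ht rM'0
    apply rule_eq' hC hab hac hbc
    · rw [SA R, SC R, if_pos hlast, if_pos hlast]
      linarith [hm, rW (univ.filter (fun i : Fin n => i.castSucc ∈ R)), rW0 (univ.filter (fun i : Fin n => i.castSucc ∈ R)), rMM', rM8]
    · rw [SB R, SC R, if_pos hlast, if_pos hlast]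
      linarith [hm, rW (univ.filter (fun i : Fin n => i.castSucc ∈ R)), rW0 (univ.filter (fun i : Fin n => i.castSucc ∈ R)), rMM', rM8]
  have F2 : ∀ R : Finset (Fin (n+1)), Fin.last n ∈ R →
      (univ.filter (fun i : Fin n => i.castSucc ∈ R)).card = k →
      (∑ i ∈ univ.filter (fun i : Fin n => i.castSucc ∈ R), w i) = M →
      scoringRule α (∑ j ∈ R, G j) = {c} := by
    intro R hlast hcard hsum
    have hc' : ((univ.filter (fun i : Fin n => i.castSucc ∈ R)).card : ℝ) = (k : ℝ) := by exact_mod_cast hcard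
    have hs' : (∑ i ∈ univ.filter (fun i : Fin n => i.castSucc ∈ R), (w i : ℝ)) = (M : ℝ) := by exact_mod_cast hsum
    apply rule_eq' hC hab hac hbc
    · rw [SA R, SC R, if_pos hlast, if_pos hlast, hc', hs']
      linarith [rM8]
    · rw [SB R, SC R, if_pos hlast, if_pos hlast, hc', hs']
      linarith [rM8]
  have F3 : ∀ R : Finset (Fin (n+1)), Fin.last n ∈ R →
      (univ.filter (fun i : Fin n => i.castSucc ∈ R)).card < k →
      scoringRule α (∑ j ∈ R, G j) ≠ {c} := by
    intro R hlast hcard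
    have ht : ((univ.filter (fun i : Fin n => i.castSucc ∈ R)).card : ℝ) ≤ (k : ℝ) - 1 := by
      have h1 : (univ.filter (fun i : Fin n => i.castSucc ∈ R)).card + 1 ≤ k := hcard
      have h2 : (((univ.filter (fun i : Fin n => i.castSucc ∈ R)).card : ℕ) : ℝ) + 1 ≤ (k : ℝ) := by exact_mod_cast h1
      linarith
    have hm := mul_le_mul_of_nonneg_right ht rM'0
    apply rule_ne' (x := a)
    rw [SA R, SC R, if_pos hlast, if_pos hlast]
    linarith [hm, rW (univ.filter (fun i : Fin n => i.castSucc ∈ R)), rW0 (univ.filter (fun i : Fin n => i.castSucc ∈ R)), rMM', rM8]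
  have F4 : ∀ R : Finset (Fin (n+1)), Fin.last n ∈ R →
      (univ.filter (fun i : Fin n => i.castSucc ∈ R)).card = k →
      (∑ i ∈ univ.filter (fun i : Fin n => i.castSucc ∈ R), w i) ≠ M →
      scoringRule α (∑ j ∈ R, G j) ≠ {c} := by
    intro R hlast hcard hne
    have hc' : ((univ.filter (fun i : Fin n => i.castSucc ∈ R)).card : ℝ) = (k : ℝ) := by exact_mod_cast hcard
    have hdv : 8 ∣ ∑ i ∈ univ.filter (fun i : Fin n => i.castSucc ∈ R), w i := Finset.dvd_sum (fun i _ => hw8 i)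
    have hdM : 8 ∣ M := ⟨m0, hm0⟩
    rcases (by omega : M + 8 ≤ ∑ i ∈ univ.filter (fun i : Fin n => i.castSucc ∈ R), w i ∨
        (∑ i ∈ univ.filter (fun i : Fin n => i.castSucc ∈ R), w i) + 8 ≤ M) with h | h
    · apply rule_ne' (x := b)
      have h' : (M : ℝ) + 8 ≤ ∑ i ∈ univ.filter (fun i : Fin n => i.castSucc ∈ R), (w i : ℝ) := by exact_mod_cast h
      rw [SB R, SC R, if_pos hlast, if_pos hlast, hc']
      linarith
    · apply rule_ne' (x := a)
      have h' : (∑ i ∈ univ.filter (fun i : Fin n => i.castSucc ∈ R), (w i : ℝ)) + 8 ≤ (M : ℝ) := by exact_mod_cast h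
      rw [SA R, SC R, if_pos hlast, if_pos hlast, hc']
      linarith
  have F5 : ∀ R : Finset (Fin (n+1)), Fin.last n ∉ R →
      ∀ i₀ : Fin n, i₀ ∈ univ.filter (fun i : Fin n => i.castSucc ∈ R) →
      scoringRule α (∑ j ∈ R, G j) = {c} := by
    intro R hlast i₀ hi₀
    have hcard : 1 ≤ (univ.filter (fun i : Fin n => i.castSucc ∈ R)).card := Finset.card_pos.mpr ⟨i₀, hi₀⟩
    have ht : (1 : ℝ) ≤ ((univ.filter (fun i : Fin n => i.castSucc ∈ R)).card : ℝ) := by exact_mod_cast hcard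
    have hm := mul_le_mul_of_nonneg_right ht rM'0
    apply rule_eq' hC hab hac hbc
    · rw [SA R, SC R, if_neg hlast, if_neg hlast]
      linarith [hm, rW (univ.filter (fun i : Fin n => i.castSucc ∈ R)), rW0 (univ.filter (fun i : Fin n => i.castSucc ∈ R)), rM'pos]
    · rw [SB R, SC R, if_neg hlast, if_neg hlast]
      linarith [hm, rW (univ.filter (fun i : Fin n => i.castSucc ∈ R)), rW0 (univ.filter (fun i : Fin n => i.castSucc ∈ R)), rM'pos]
  -- the undisturbed winner
  have hTuniv : univ.filter (fun i : Fin n => i.castSucc ∈ (univ : Finset (Fin (n+1)))) = univ := by simp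
  have hfull : scoringRule α (∑ j, G j) = {c} := by
    apply F1 univ (Finset.mem_univ _)
    rw [hTuniv, Finset.card_univ, Fintype.card_fin]
    omega
  unfold AttackYes
  constructor
  · -- a successful attack implies no k-subset sums to M
    rintro ⟨IA, hIAc, hIA⟩ ⟨I₀, hI₀c, hI₀s⟩
    have hmm : ∀ (s : Finset (Fin n)) (i : Fin n),
        i.castSucc ∈ s.map ⟨Fin.castSucc, Fin.castSucc_injective n⟩ ↔ i ∈ s :=
      fun s i => Finset.mem_map' _
    by_cases hlast : Fin.last n ∈ IA
    · -- the defender restores one regular voter group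
      have hn : 0 < n := by omega
      refine hIA {(Fin.castSucc ⟨0, hn⟩ : Fin (n+1))}
        (by rw [Finset.card_singleton]; exact hkpos) ?_
      rw [hfull]
      refine F5 _ ?_ ⟨0, hn⟩ ?_
      · simp [Finset.mem_sdiff, hlast, (Fin.castSucc_lt_last (⟨0, hn⟩ : Fin n)).ne']
        omega
      · simp [Finset.mem_sdiff]
    · -- Ĝ survives
      by_cases h1 : k + 1 ≤ (univ.filter (fun i : Fin n => i.castSucc ∈ (univ \ IA))).card
      · refine hIA ∅ (by simp) ?_
        rw [hfull]
        apply F1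
        · simp [hlast]
        · have he : univ.filter (fun i : Fin n => i.castSucc ∈ (univ \ (IA \ (∅ : Finset (Fin (n+1)))))) = univ.filter (fun i : Fin n => i.castSucc ∈ (univ \ IA)) := by
            ext i; simp
          rw [he]
          exact h1
      · by_cases h2 : (univ.filter (fun i : Fin n => i.castSucc ∈ (univ \ IA))).card = 0
        · -- all regular groups were removed: restore exactly I₀
          have hall : ∀ i : Fin n, i.castSucc ∈ IA := by
            intro i
            by_contra hcon
            have hmem : i ∈ univ.filter (fun i : Fin n => i.castSucc ∈ (univ \ IA)) := by simp [hcon]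
            rw [Finset.card_eq_zero] at h2
            rw [h2] at hmem
            exact absurd hmem (Finset.notMem_empty i)
          refine hIA (I₀.map ⟨Fin.castSucc, Fin.castSucc_injective n⟩) (by rw [Finset.card_map, hI₀c]) ?_
          rw [hfull]
          have hTeq : univ.filter (fun i : Fin n => i.castSucc ∈ (univ \ (IA \ I₀.map ⟨Fin.castSucc, Fin.castSucc_injective n⟩))) = I₀ := by
            ext i
            simp [Finset.mem_sdiff, hall i, hmm I₀ i]
          refine F2 _ ?_ ?_ ?_
          · simp [Finset.mem_sdiff, hlast]
          · rw [hTeq]; exact hI₀c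
          · rw [hTeq]; exact hI₀s
        · -- some but at most k regular groups survive: top up with k more
          have h4 : k ≤ (univ \ (univ.filter (fun i : Fin n => i.castSucc ∈ (univ \ IA)))).card := by
            rw [Finset.card_sdiff_of_subset (Finset.subset_univ _), Finset.card_univ, Fintype.card_fin]
            have h5 : (univ.filter (fun i : Fin n => i.castSucc ∈ (univ \ IA))).card ≤ n := by
              apply le_trans (Finset.card_le_card (Finset.filter_subset _ _))
              rw [Finset.card_univ, Fintype.card_fin]
            omega
          obtain ⟨J, hJsub, hJcard⟩ := Finset.exists_subset_card_eq h4
          have hdisj : Disjoint (univ.filter (fun i : Fin n => i.castSucc ∈ (univ \ IA))) J :=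
            Finset.disjoint_of_subset_right hJsub Finset.sdiff_disjoint.symm
          refine hIA (J.map ⟨Fin.castSucc, Fin.castSucc_injective n⟩) (by rw [Finset.card_map, hJcard]) ?_
          rw [hfull]
          have hTeq : univ.filter (fun i : Fin n => i.castSucc ∈ (univ \ (IA \ J.map ⟨Fin.castSucc, Fin.castSucc_injective n⟩))) = (univ.filter (fun i : Fin n => i.castSucc ∈ (univ \ IA))) ∪ J := by
            ext i
            simp only [Finset.mem_filter, Finset.mem_univ, true_and, Finset.mem_sdiff,
              Finset.mem_union, hmm J i]
            tauto
          apply F1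
          · simp [Finset.mem_sdiff, hlast]
          · rw [hTeq, Finset.card_union_of_disjoint hdisj, hJcard]
            omega
  · -- no k-subset sums to M: remove all regular groups
    intro hno
    refine ⟨univ.erase (Fin.last n), ?_, ?_⟩
    · rw [Finset.card_erase_of_mem (Finset.mem_univ _), Finset.card_univ, Fintype.card_fin]
      omega
    · intro I' hI'c
      have hlastR : Fin.last n ∈ univ \ (univ.erase (Fin.last n) \ I') := by
        simp [Finset.mem_sdiff]
      have hTsub : ∀ i : Fin n,
          i ∈ univ.filter (fun i : Fin n => i.castSucc ∈ (univ \ (univ.erase (Fin.last n) \ I'))) → i.castSucc ∈ I' := by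
        intro i hi
        have h1 := (Finset.mem_filter.1 hi).2
        have h2 := (Finset.mem_sdiff.1 h1).2
        by_contra hI
        exact h2 (Finset.mem_sdiff.2
          ⟨Finset.mem_erase.2 ⟨(Fin.castSucc_lt_last i).ne, Finset.mem_univ _⟩, hI⟩)
      have hcardle : (univ.filter (fun i : Fin n => i.castSucc ∈ (univ \ (univ.erase (Fin.last n) \ I')))).card ≤ k := by
        refine le_trans (Finset.card_le_card_of_injOn (fun i => i.castSucc) ?_ ?_) hI'c
        · exact fun i hi => hTsub i hi
        · exact fun x _ y _ h => Fin.castSucc_injective n h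
      rw [hfull]
      rcases lt_or_eq_of_le hcardle with hlt | heq
      · exact F3 _ hlastR hlt
      · refine F4 _ hlastR heq ?_
        intro hsum
        exact hno ⟨_, heq, hsum⟩
end

section
/- Fix the candidate set C = {a,b,c}. Let w_1,…,w_n be positive integers, let M and k be positive integers with k ≤ n, 2k < n, M < ∑_{i=1}^n w_i and M < kM', where M' = max{w_i : i ∈ [n]}. Let G_1,…,G_n and Ĝ be profiles over C such that: for each i ∈ [n], D_{G_i}(a,b) = 2w_i, D_{G_i}(a,c) = 2(M' − w_i) and D_{G_i}(b,c) = 0; and D_{Ĝ}(b,a) = 2M − 1, D_{Ĝ}(c,a) = 2(kM' − M) − 1 and D_{Ĝ}(b,c) = 1 (such profiles exist). Assume that a is the Condorcet winner of the concatenation of all the groups G_1,…,G_n, Ĝ. Then the Optimal Attack instance (C, {G_1,…,G_n, Ĝ}, k_a = n+1, k_d = k) for the Condorcet voting rule is a Yes instance if and only if there is NO index set I ⊆ [n] with |I| = k and ∑_{i∈I} w_i = M. -/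
open Finset

section Aux

set_option linter.unusedSectionVars false

variable {C : Type} [DecidableEq C] {m : ℕ}

lemma margin_add' (P Q : Multiset (Vote C m)) (x y : C) :
    margin (P + Q) x y = margin P x y + margin Q x y := by
  simp [margin, Multiset.filter_add]; ring

lemma margin_zero' (x y : C) : margin (0 : Multiset (Vote C m)) x y = 0 := by
  simp [margin]

lemma margin_neg' (P : Multiset (Vote C m)) (x y : C) : margin P y x = - margin P x y := by
  simp [margin]

lemma margin_sum' {ι : Type*} (s : Finset ι) (P : ι → Multiset (Vote C m)) (x y : C) :
    margin (∑ i ∈ s, P i) x y = ∑ i ∈ s, margin (P i) x y := by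
  classical
  induction s using Finset.induction_on with
  | empty => simp [margin_zero']
  | insert _ _ h ih => rw [Finset.sum_insert h, Finset.sum_insert h, margin_add', ih]

lemma rule_eq_singleton (P : Multiset (Vote C m)) (a : C) (h : CondorcetWinner P a) :
    condorcetRule P = {a} := by
  ext x
  simp only [condorcetRule, Set.mem_setOf_eq, Set.mem_singleton_iff]
  constructor
  · rintro (hx | hx)
    · by_contra hne
      have h1 := hx a (fun he => hne he.symm)
      have h2 := h x hne
      rw [margin_neg'] at h1
      omega
    · exact absurd ⟨a, h⟩ hx
  · rintro rfl; exact Or.inl h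

lemma rule_ne_singleton (P : Multiset (Vote C m)) (a b : C) (hba : b ≠ a)
    (h : ¬ CondorcetWinner P a) : condorcetRule P ≠ {a} := by
  intro he
  by_cases hc : ∃ d, CondorcetWinner P d
  · have ha : a ∈ condorcetRule P := by rw [he]; rfl
    simp only [condorcetRule, Set.mem_setOf_eq] at ha
    rcases ha with h' | h'
    · exact h h'
    · exact h' hc
  · have hb : b ∈ condorcetRule P := Or.inr hc
    rw [he] at hb
    exact hba hb

lemma cw_iff (P : Multiset (Vote C m)) (a b c : C) (huniv : ∀ y : C, y = a ∨ y = b ∨ y = c)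
    (hab : a ≠ b) (hac : a ≠ c) :
    CondorcetWinner P a ↔ 0 < margin P a b ∧ 0 < margin P a c := by
  constructor
  · exact fun h => ⟨h b (Ne.symm hab), h c (Ne.symm hac)⟩
  · rintro ⟨h1, h2⟩ y hy
    rcases huniv y with rfl | rfl | rfl
    · exact absurd rfl hy
    · exact h1
    · exact h2

lemma margin_snoc_sum {n : ℕ} (G : Fin n → Multiset (Vote C m)) (Gh : Multiset (Vote C m))
    (x y : C) (T : Finset (Fin (n + 1))) :
    margin (∑ i ∈ T, (Fin.snoc G Gh : Fin (n + 1) → Multiset (Vote C m)) i) x y =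
      ∑ j ∈ Finset.univ.filter (fun j : Fin n => j.castSucc ∈ T), margin (G j) x y
        + (if Fin.last n ∈ T then margin Gh x y else 0) := by
  rw [margin_sum']
  have himg : (Finset.univ.filter (fun j : Fin n => j.castSucc ∈ T)).image Fin.castSucc
      = T.filter (fun i => i ≠ Fin.last n) := by
    ext i
    simp only [Finset.mem_image, Finset.mem_filter, Finset.mem_univ, true_and]
    constructor
    · rintro ⟨j, hj, rfl⟩; exact ⟨hj, (Fin.castSucc_lt_last j).ne⟩
    · rintro ⟨hi, hne⟩
      exact ⟨i.castPred hne, by rwa [Fin.castSucc_castPred], Fin.castSucc_castPred _ _⟩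
  have h1 : ∑ i ∈ T.filter (fun i => i ≠ Fin.last n), margin ((Fin.snoc G Gh : Fin (n + 1) → Multiset (Vote C m)) i) x y
      = ∑ j ∈ Finset.univ.filter (fun j : Fin n => j.castSucc ∈ T), margin (G j) x y := by
    rw [← himg, Finset.sum_image (fun p _ q _ hpq => Fin.castSucc_injective n hpq)]
    simp [Fin.snoc_castSucc]
  have h2 : ∑ i ∈ T.filter (fun i => ¬ i ≠ Fin.last n), margin ((Fin.snoc G Gh : Fin (n + 1) → Multiset (Vote C m)) i) x y
      = (if Fin.last n ∈ T then margin Gh x y else 0) := by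
    have : T.filter (fun i => ¬ i ≠ Fin.last n) = T.filter (fun i => i = Fin.last n) := by
      simp [not_not]
    rw [this, Finset.filter_eq']
    split_ifs with h
    · simp [Fin.snoc_last]
    · simp
  rw [← Finset.sum_filter_add_sum_filter_not T (fun i => i ≠ Fin.last n), h1, h2]

end Aux

/-- the k-Sum reduction instance for Optimal Attack under the
Condorcet voting rule with 3 candidates. -/
theorem stmt5 {C : Type} [Fintype C] [DecidableEq C] (hC : Fintype.card C = 3)
    (a b c : C) (hab : a ≠ b) (hac : a ≠ c) (hbc : b ≠ c)
    (n : ℕ) (w : Fin n → ℕ) (hwpos : ∀ i, 0 < w i)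
    (M k M' : ℕ) (hMpos : 0 < M) (hkpos : 0 < k) (hkn : k ≤ n) (h2k : 2 * k < n)
    (hMsum : M < ∑ i, w i) (hM'def : M' = Finset.univ.sup w) (hMkM' : M < k * M')
    (G : Fin n → Multiset (Vote C 3)) (Ghat : Multiset (Vote C 3))
    (hGab : ∀ i, margin (G i) a b = 2 * (w i : ℤ))
    (hGac : ∀ i, margin (G i) a c = 2 * ((M' : ℤ) - (w i : ℤ)))
    (hGbc : ∀ i, margin (G i) b c = 0)
    (hHba : margin Ghat b a = 2 * (M : ℤ) - 1)
    (hHca : margin Ghat c a = 2 * ((k : ℤ) * (M' : ℤ) - (M : ℤ)) - 1)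
    (hHbc : margin Ghat b c = 1)
    (hwin : CondorcetWinner (∑ i : Fin (n + 1), (Fin.snoc G Ghat : Fin (n + 1) → Multiset (Vote C 3)) i) a) :
    AttackYes condorcetRule (Fin.snoc G Ghat) (n + 1) k ↔
    ¬ ∃ I : Finset (Fin n), I.card = k ∧ ∑ i ∈ I, w i = M := by
  classical
  have huniv : ∀ y : C, y = a ∨ y = b ∨ y = c := by
    have hcard3 : ({a, b, c} : Finset C).card = 3 := by
      rw [Finset.card_insert_of_notMem (by simp [hab, hac]),
        Finset.card_insert_of_notMem (by simp [hbc]), Finset.card_singleton]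
    have huniv' : ({a, b, c} : Finset C) = Finset.univ :=
      Finset.eq_univ_of_card _ (hcard3.trans hC.symm)
    intro y
    have : y ∈ ({a, b, c} : Finset C) := huniv' ▸ Finset.mem_univ y
    simpa using this
  have hwle : ∀ i, w i ≤ M' := fun i => hM'def ▸ Finset.le_sup (Finset.mem_univ i)
  have hM'pos : 0 < M' := by
    rcases Nat.eq_zero_or_pos M' with h | h
    · rw [h, Nat.mul_zero] at hMkM'; omega
    · exact h
  -- margin computations for an arbitrary surviving index set T
  have hmab : ∀ T : Finset (Fin (n + 1)),
      margin (∑ i ∈ T, (Fin.snoc G Ghat : Fin (n + 1) → Multiset (Vote C 3)) i) a b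
        = 2 * (∑ j ∈ Finset.univ.filter (fun j : Fin n => j.castSucc ∈ T), (w j : ℤ))
          + (if Fin.last n ∈ T then -(2 * (M : ℤ) - 1) else 0) := by
    intro T
    rw [margin_snoc_sum]
    have hG' : margin Ghat a b = -(2 * (M : ℤ) - 1) := by
      rw [margin_neg' Ghat b a, hHba]
    rw [hG', Finset.mul_sum]
    congr 1
    exact Finset.sum_congr rfl fun j _ => hGab j
  have hmac : ∀ T : Finset (Fin (n + 1)),
      margin (∑ i ∈ T, (Fin.snoc G Ghat : Fin (n + 1) → Multiset (Vote C 3)) i) a c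
        = 2 * (∑ j ∈ Finset.univ.filter (fun j : Fin n => j.castSucc ∈ T),
            ((M' : ℤ) - (w j : ℤ)))
          + (if Fin.last n ∈ T then -(2 * ((k : ℤ) * (M' : ℤ) - (M : ℤ)) - 1) else 0) := by
    intro T
    rw [margin_snoc_sum]
    have hG' : margin Ghat a c = -(2 * ((k : ℤ) * (M' : ℤ) - (M : ℤ)) - 1) := by
      rw [margin_neg' Ghat c a, hHca]
    rw [hG', Finset.mul_sum]
    congr 1
    exact Finset.sum_congr rfl fun j _ => hGac j
  constructor
  · -- AttackYes → no k-subset sums to M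
    rintro ⟨I, hIc, hI⟩ ⟨I0, hI0c, hI0s⟩
    by_cases hLI : Fin.last n ∈ I
    · -- defender restores one group with w j < M'
      have hj : ∃ j, w j < M' := by
        by_contra h
        push_neg at h
        have hall : ∀ j ∈ I0, w j = M' := fun j _ => le_antisymm (hwle j) (h j)
        have : ∑ i ∈ I0, w i = k * M' := by
          rw [Finset.sum_congr rfl hall, Finset.sum_const, hI0c, smul_eq_mul]
        omega
      obtain ⟨j, hjw⟩ := hj
      have hCW : CondorcetWinner
          (∑ i ∈ Finset.univ \ (I \ ({j.castSucc} : Finset (Fin (n + 1)))),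
            (Fin.snoc G Ghat : Fin (n + 1) → Multiset (Vote C 3)) i) a := by
        rw [cw_iff _ a b c huniv hab hac, hmab, hmac]
        set T := Finset.univ \ (I \ ({j.castSucc} : Finset (Fin (n + 1)))) with hT
        set S := Finset.univ.filter (fun j : Fin n => j.castSucc ∈ T) with hS
        have hLT : Fin.last n ∉ T := by
          simp only [hT, Finset.mem_sdiff, Finset.mem_univ, true_and, not_not]
          exact ⟨hLI, Finset.notMem_singleton.mpr (Fin.castSucc_lt_last j).ne'⟩
        have hjS : j ∈ S := by simp [hS, hT]
        simp only [if_neg hLT]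
        constructor
        · have h1 : (w j : ℤ) ≤ ∑ i ∈ S, (w i : ℤ) :=
            Finset.single_le_sum (f := fun i => ((w i : ℤ))) (fun i _ => by positivity) hjS
          have h2 : (1 : ℤ) ≤ (w j : ℤ) := by exact_mod_cast hwpos j
          linarith
        · have h1 : ((M' : ℤ) - (w j : ℤ)) ≤ ∑ i ∈ S, ((M' : ℤ) - (w i : ℤ)) :=
            Finset.single_le_sum (f := fun i => (M' : ℤ) - (w i : ℤ))
              (fun i _ => sub_nonneg.mpr (by exact_mod_cast hwle i)) hjS
          have h2 : (0 : ℤ) < (M' : ℤ) - (w j : ℤ) := by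
            have := hjw; omega
          linarith
      exact hI {j.castSucc} (by simp; omega)
        (by rw [rule_eq_singleton _ a hwin, rule_eq_singleton _ a hCW])
    · -- defender restores the groups of I0
      have hCW : CondorcetWinner
          (∑ i ∈ Finset.univ \ (I \ I0.image Fin.castSucc),
            (Fin.snoc G Ghat : Fin (n + 1) → Multiset (Vote C 3)) i) a := by
        rw [cw_iff _ a b c huniv hab hac, hmab, hmac]
        set T := Finset.univ \ (I \ I0.image Fin.castSucc) with hT
        set S := Finset.univ.filter (fun j : Fin n => j.castSucc ∈ T) with hS
        have hLT : Fin.last n ∈ T := by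
          simp only [hT, Finset.mem_sdiff, Finset.mem_univ, true_and, Finset.mem_sdiff]
          tauto
        have hsub : I0 ⊆ S := by
          intro i hi
          simp only [hS, Finset.mem_filter, Finset.mem_univ, true_and, hT,
            Finset.mem_sdiff, Finset.mem_univ, true_and, Finset.mem_sdiff]
          intro h
          exact h.2 (Finset.mem_image_of_mem _ hi)
        have hI0sum : ∑ i ∈ I0, (w i : ℤ) = (M : ℤ) := by
          rw [← Nat.cast_sum, hI0s]
        have hI0sum' : ∑ i ∈ I0, ((M' : ℤ) - (w i : ℤ))
            = (k : ℤ) * (M' : ℤ) - (M : ℤ) := by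
          rw [Finset.sum_sub_distrib, Finset.sum_const, hI0c, nsmul_eq_mul, hI0sum]
        simp only [if_pos hLT]
        constructor
        · have h1 : ∑ i ∈ I0, (w i : ℤ) ≤ ∑ i ∈ S, (w i : ℤ) :=
            Finset.sum_le_sum_of_subset_of_nonneg hsub (fun i _ _ => by positivity)
          rw [hI0sum] at h1
          linarith
        · have h1 : ∑ i ∈ I0, ((M' : ℤ) - (w i : ℤ))
              ≤ ∑ i ∈ S, ((M' : ℤ) - (w i : ℤ)) :=
            Finset.sum_le_sum_of_subset_of_nonneg hsub
              (fun i _ _ => sub_nonneg.mpr (by exact_mod_cast hwle i))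
          rw [hI0sum'] at h1
          linarith
      exact hI (I0.image Fin.castSucc)
        (by rw [Finset.card_image_of_injective _ (Fin.castSucc_injective n), hI0c])
        (by rw [rule_eq_singleton _ a hwin, rule_eq_singleton _ a hCW])
  · -- no k-subset sums to M → AttackYes: delete all G i
    intro hno
    refine ⟨(Finset.univ : Finset (Fin n)).image Fin.castSucc, ?_, ?_⟩
    · rw [Finset.card_image_of_injective _ (Fin.castSucc_injective n), Finset.card_univ,
        Fintype.card_fin]
      omega
    · intro I' hI'c
      rw [rule_eq_singleton _ a hwin]
      refine rule_ne_singleton _ a b hab.symm ?_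
      intro hCW
      rw [cw_iff _ a b c huniv hab hac, hmab, hmac] at hCW
      set I := (Finset.univ : Finset (Fin n)).image Fin.castSucc with hIdef
      set T := Finset.univ \ (I \ I') with hT
      set S := Finset.univ.filter (fun j : Fin n => j.castSucc ∈ T) with hS
      have hLT : Fin.last n ∈ T := by
        simp only [hT, Finset.mem_sdiff, Finset.mem_univ, true_and, Finset.mem_sdiff]
        intro h
        obtain ⟨jj, _, hjj⟩ := Finset.mem_image.mp (hIdef ▸ h.1)
        exact (Fin.castSucc_lt_last jj).ne hjj
      simp only [if_pos hLT] at hCW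
      obtain ⟨h1, h2⟩ := hCW
      -- S injects into I'
      have hScard : S.card ≤ k := by
        refine le_trans ?_ hI'c
        refine Finset.card_le_card_of_injOn (fun j => j.castSucc) ?_
          (fun x _ y _ h => Fin.castSucc_injective n h)
        intro j hj
        simp only [hS, Finset.mem_filter, Finset.mem_univ, true_and, hT,
          Finset.mem_sdiff, Finset.mem_univ, true_and, Finset.mem_sdiff, not_and,
          not_not, Finset.coe_filter, Set.mem_setOf_eq] at hj
        exact hj (hIdef ▸ Finset.mem_image_of_mem _ (Finset.mem_univ j))
      -- translate to ℕ facts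
      have hsum_cast : ∑ i ∈ S, (w i : ℤ) = ((∑ i ∈ S, w i : ℕ) : ℤ) := by
        push_cast; ring
      have hsum2 : ∑ i ∈ S, ((M' : ℤ) - (w i : ℤ))
          = (S.card : ℤ) * (M' : ℤ) - ((∑ i ∈ S, w i : ℕ) : ℤ) := by
        rw [Finset.sum_sub_distrib, Finset.sum_const, nsmul_eq_mul, hsum_cast]
      rw [hsum_cast] at h1
      rw [hsum2] at h2
      have hMle : M ≤ ∑ i ∈ S, w i := by
        have h : (M : ℤ) ≤ ((∑ i ∈ S, w i : ℕ) : ℤ) := by linarith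
        exact_mod_cast h
      have hkey : k * M' + ∑ i ∈ S, w i ≤ S.card * M' + M := by
        have : (k : ℤ) * M' + ((∑ i ∈ S, w i : ℕ) : ℤ) ≤ (S.card : ℤ) * M' + M := by
          linarith
        exact_mod_cast this
      have hcm : S.card * M' ≤ k * M' := Nat.mul_le_mul_right _ hScard
      have hsumM : ∑ i ∈ S, w i = M := by
        refine le_antisymm ?_ hMle
        have h := hkey.trans (Nat.add_le_add_right hcm M)
        exact Nat.le_of_add_le_add_left h
      have hkS : k ≤ S.card := by
        have h := hkey
        rw [hsumM] at h
        exact Nat.le_of_mul_le_mul_right (Nat.le_of_add_le_add_right h) hM'pos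
      exact hno ⟨S, le_antisymm hScard hkS, hsumM⟩
end
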